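/- arXiv:1408.2940 — 3 statements merged into one kernel-verified Lean document; each statement's English description precedes it below -/
import Mathlib

section
/- Let c₀ ∈ [0,1) and c₁ ≥ 0. Then for every θ ∈ [0,1], c₀² θ + min(c₁² θ, 1 − θ) ≤ (c₀² + c₁²)/(1 + c₁²), and moreover (c₀² + c₁²)/(1 + c₁²) < 1. -/
theorem scalar_min_bound
    (c₀ c₁ : ℝ) (hc₀ : 0 ≤ c₀) (hc₀' : c₀ < 1) (hc₁ : 0 ≤ c₁) :
    (∀ θ : ℝ, θ ∈ Set.Icc (0 : ℝ) 1 →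
      c₀ ^ 2 * θ + min (c₁ ^ 2 * θ) (1 - θ) ≤ (c₀ ^ 2 + c₁ ^ 2) / (1 + c₁ ^ 2)) ∧
    (c₀ ^ 2 + c₁ ^ 2) / (1 + c₁ ^ 2) < 1 := by
  have h1 : (0:ℝ) < 1 + c₁ ^ 2 := by positivity
  constructor
  · intro θ ⟨h0, hθ1⟩
    rw [le_div_iff₀ h1]
    rcases le_total (c₁ ^ 2 * θ) (1 - θ) with h | h
    · rw [min_eq_left h]; nlinarith [sq_nonneg c₀, sq_nonneg c₁, mul_nonneg (sq_nonneg c₁) h0]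
    · rw [min_eq_right h]; have hc : c₀ ^ 2 < 1 := by nlinarith
      nlinarith [mul_nonneg (sub_nonneg.2 hc.le) (by nlinarith : (0:ℝ) ≤ θ * (1 + c₁ ^ 2) - 1)]
  · rw [div_lt_one h1]; nlinarith
end

section
/- Let S be a finite-dimensional real inner product space decomposed as a direct sum S = W₀ ⊕ W₁ ⊕ W₂, with L²-orthogonal projections Q_l : S → W_l. Let a(·,·) be a symmetric positive definite bilinear form on S with associated operator A (defined by ⟨Au, v⟩ = a(u,v)), and let B_l : W_l → W_l be symmetric positive definite operators. Define C = Σ_{l=0}^{2} B_l⁻¹ Q_l. If there exist constants K₁, K₂ > 0 such that K₁⁻¹ Σ_l ⟨B_l u_l, u_l⟩ ≤ a(u₀+u₁+u₂, u₀+u₁+u₂) ≤ K₂ Σ_l ⟨B_l u_l, u_l⟩ for all u_l ∈ W_l, then every eigenvalue of CA is real and lies in the interval [K₁⁻¹, K₂]. -/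
open scoped RealInnerProductSpace

/-- Yserentant's abstract additive subspace correction result for three subspaces:
if the `B_l`-weighted splitting norms are uniformly equivalent to the energy norm,
then the eigenvalues of the preconditioned operator `C A` lie in `[K₁⁻¹, K₂]`. -/
theorem additive_subspace_correction_spectrum
    {S : Type*} [NormedAddCommGroup S] [InnerProductSpace ℝ S] [FiniteDimensional ℝ S]
    (W : Fin 3 → Submodule ℝ S)
    (hdirect : DirectSum.IsInternal W)
    (A : S →ₗ[ℝ] S)
    (hAsym : ∀ u v : S, ⟪A u, v⟫ = ⟪u, A v⟫)
    (hApos : ∀ u : S, u ≠ 0 → 0 < ⟪A u, u⟫)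
    (B Binv : Fin 3 → (S →ₗ[ℝ] S))
    (hBmap : ∀ l, ∀ w ∈ W l, B l w ∈ W l)
    (hBsym : ∀ l, ∀ u ∈ W l, ∀ v ∈ W l, ⟪B l u, v⟫ = ⟪u, B l v⟫)
    (hBpos : ∀ l, ∀ u ∈ W l, u ≠ 0 → 0 < ⟪B l u, u⟫)
    (hBinv : ∀ l, ∀ w ∈ W l, Binv l (B l w) = w ∧ B l (Binv l w) = w)
    (K₁ K₂ : ℝ) (hK₁ : 0 < K₁) (hK₂ : 0 < K₂)
    (hsandwich : ∀ u : Fin 3 → S, (∀ l, u l ∈ W l) →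
      K₁⁻¹ * (∑ l, ⟪B l (u l), u l⟫) ≤ ⟪A (∑ l, u l), ∑ l, u l⟫ ∧
      ⟪A (∑ l, u l), ∑ l, u l⟫ ≤ K₂ * (∑ l, ⟪B l (u l), u l⟫))
    (C : S →ₗ[ℝ] S)
    (hC : C = ∑ l, (Binv l) ∘ₗ ((W l).subtype ∘ₗ ((W l).orthogonalProjection).toLinearMap))
    (μ : ℝ) (u : S) (hu : u ≠ 0) (heig : (C ∘ₗ A) u = μ • u) :
    K₁⁻¹ ≤ μ ∧ μ ≤ K₂ := by
  -- B l restricted to W l is bijective, so Binv l maps W l into itself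
  have hBinvMem : ∀ l, ∀ w ∈ W l, Binv l w ∈ W l := by
    intro l w hw
    set f : W l →ₗ[ℝ] W l := (B l).restrict (hBmap l) with hf
    have hinj : Function.Injective f := by
      rw [← LinearMap.ker_eq_bot, LinearMap.ker_eq_bot']
      intro m hm
      by_contra hm0
      have hmne : (m : S) ≠ 0 := fun h => hm0 (Subtype.ext h)
      have := hBpos l m m.2 hmne
      have hfm : (f m : S) = B l m := rfl
      rw [← hfm, hm] at this
      simp at this
    have hsurj : Function.Surjective f := (LinearMap.injective_iff_surjective).mp hinj
    obtain ⟨x, hx⟩ := hsurj ⟨w, hw⟩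
    have hx' : B l (x : S) = w := congrArg Subtype.val hx
    have := (hBinv l x x.2).1
    rw [hx'] at this
    rw [this]
    exact x.2
  -- the components of the splitting
  set Q : Fin 3 → (S →ₗ[ℝ] S) :=
    fun l => (W l).subtype ∘ₗ ((W l).orthogonalProjection).toLinearMap with hQ
  have hQmem : ∀ l v, Q l v ∈ W l := fun l v => SetLike.coe_mem _
  set w : Fin 3 → S := fun l => Binv l (Q l (A u)) with hw
  have hwmem : ∀ l, w l ∈ W l := fun l => hBinvMem l _ (hQmem l (A u))
  have hBw : ∀ l, B l (w l) = Q l (A u) := fun l => (hBinv l _ (hQmem l (A u))).2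
  have hsum : ∑ l, w l = μ • u := by
    rw [← heig, LinearMap.comp_apply, hC, LinearMap.sum_apply]
    rfl
  set α : ℝ := ⟪A u, u⟫ with hα
  have hαpos : 0 < α := hApos u hu
  -- the key identity ∑ ⟪B w, w⟫ = μ α
  have hT : (∑ l, ⟪B l (w l), w l⟫) = μ * α := by
    have h1 : ∀ l, ⟪B l (w l), w l⟫ = ⟪A u, w l⟫ := by
      intro l
      rw [hBw]
      have horth : ⟪A u - ((W l).orthogonalProjection (A u) : S), w l⟫ = 0 :=
        Submodule.starProjection_inner_eq_zero (K := W l) (A u) (w l) (hwmem l)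
      have : Q l (A u) = ((W l).orthogonalProjection (A u) : S) := rfl
      rw [this]
      rw [inner_sub_left] at horth
      linarith
    calc (∑ l, ⟪B l (w l), w l⟫) = ∑ l, ⟪A u, w l⟫ := by
          exact Finset.sum_congr rfl fun l _ => h1 l
      _ = ⟪A u, ∑ l, w l⟫ := by rw [inner_sum]
      _ = ⟪A u, μ • u⟫ := by rw [hsum]
      _ = μ * α := by rw [inner_smul_right]
  -- energy of the sum
  have hE : ⟪A (∑ l, w l), ∑ l, w l⟫ = μ * (μ * α) := by
    rw [hsum, map_smul, real_inner_smul_left, real_inner_smul_right]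
  obtain ⟨hlow, hhigh⟩ := hsandwich w hwmem
  rw [hT, hE] at hlow hhigh
  -- each term of T is nonnegative
  have hterm : ∀ l, (0:ℝ) ≤ ⟪B l (w l), w l⟫ := by
    intro l
    rcases eq_or_ne (w l) 0 with h | h
    · simp [h]
    · exact le_of_lt (hBpos l _ (hwmem l) h)
  -- μ α ≠ 0, else A u = 0, contradiction
  have hμα : μ * α ≠ 0 := by
    intro h0
    have hzero : ∀ l, ⟪B l (w l), w l⟫ = 0 := by
      intro l
      have := (Finset.sum_eq_zero_iff_of_nonneg (fun l _ => hterm l)).mp (hT.trans h0)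
      exact this l (Finset.mem_univ l)
    have hwzero : ∀ l, w l = 0 := by
      intro l
      by_contra hne
      exact (hBpos l _ (hwmem l) hne).ne' (hzero l)
    have hQzero : ∀ l, (W l).orthogonalProjection (A u) = 0 := by
      intro l
      have : Q l (A u) = 0 := by rw [← hBw l, hwzero l, map_zero]
      exact Subtype.ext this
    have hAuorth : A u ∈ ⨅ l, (W l)ᗮ := by
      rw [Submodule.mem_iInf]
      intro l
      exact Submodule.orthogonalProjectionOnto_eq_zero_iff.mp (hQzero l)
    rw [Submodule.iInf_orthogonal, hdirect.submodule_iSup_eq_top,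
      Submodule.top_orthogonal_eq_bot, Submodule.mem_bot] at hAuorth
    have : α = 0 := by rw [hα, hAuorth, inner_zero_left]
    exact hαpos.ne' this
  have hTnonneg : 0 ≤ μ * α := hT ▸ Finset.sum_nonneg fun l _ => hterm l
  have hTpos : 0 < μ * α := lt_of_le_of_ne hTnonneg (Ne.symm hμα)
  have hμpos : 0 < μ := by
    rcases mul_pos_iff.mp hTpos with ⟨h, _⟩ | ⟨_, h⟩
    · exact h
    · linarith
  constructor
  · -- K₁⁻¹ ≤ μ from K₁⁻¹ * (μα) ≤ μ * (μα)
    exact le_of_mul_le_mul_right (by linarith [hlow]) hTpos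
  · -- μ ≤ K₂ from μ * (μα) ≤ K₂ * (μα)
    exact le_of_mul_le_mul_right (by linarith [hhigh]) hTpos
end

section
/- Let (·,·)* be a real inner product on a vector space, of the form (u,v)* = b(u,v) + t(u,v), where b and t are symmetric positive semidefinite bilinear forms. Let W₁, W₂ be subspaces with b(u₁, u₂) = 0 for all u₁ ∈ W₁, u₂ ∈ W₂, and suppose there is a constant M ≥ 0 such that t(u,u) ≤ M · b(u,u) for all u ∈ W₁ ∪ W₂, and that b(u,u) + t(u,u) > 0 for nonzero u ∈ W₁ + W₂. Then there exists a constant C* < 1, depending only on M, such that |(u₁, u₂)*| ≤ C* ‖u₁‖* ‖u₂‖* for all u₁ ∈ W₁, u₂ ∈ W₂, where ‖u‖* = (u,u)*^{1/2}. Consequently ‖u₁‖*² + ‖u₂‖*² ≤ (1 − C*)⁻¹ ‖u₁ + u₂‖*². -/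
/-- Cauchy-Schwarz for a symmetric positive semidefinite bilinear form. -/
lemma psd_bilin_cauchy_schwarz {V : Type*} [AddCommGroup V] [Module ℝ V]
    (t : V →ₗ[ℝ] V →ₗ[ℝ] ℝ)
    (htsym : ∀ u v : V, t u v = t v u)
    (htpsd : ∀ u : V, 0 ≤ t u u) (u v : V) :
    |t u v| ≤ Real.sqrt (t u u) * Real.sqrt (t v v) := by
  have key : ∀ x : ℝ, 0 ≤ (t v v) * (x * x) + (2 * t u v) * x + t u u := by
    intro x
    have h := htpsd (u + x • v)
    simp only [map_add, map_smul, LinearMap.add_apply, LinearMap.smul_apply,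
      smul_eq_mul] at h
    rw [htsym v u] at h
    ring_nf at h ⊢
    linarith
  have hd := discrim_le_zero key
  rw [discrim] at hd
  have hsq : (t u v) ^ 2 ≤ t u u * t v v := by nlinarith
  have h1 : |t u v| = Real.sqrt ((t u v) ^ 2) := (Real.sqrt_sq_eq_abs _).symm
  rw [h1, ← Real.sqrt_mul (htpsd u)]
  exact Real.sqrt_le_sqrt hsq

/-- Abstract form of Lemma 3.2(b): if `b` vanishes between `W₁` and `W₂` and the
penalty form `t` is controlled by `b` on each subspace, then a strengthened
Cauchy-Schwarz inequality with constant `C* < 1` holds, and hence the splitting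
`W₁ ⊕ W₂` is stable. -/
theorem stable_splitting_from_orthogonality_and_trace
    {V : Type*} [AddCommGroup V] [Module ℝ V]
    (b t : V →ₗ[ℝ] V →ₗ[ℝ] ℝ)
    (hbsym : ∀ u v : V, b u v = b v u)
    (htsym : ∀ u v : V, t u v = t v u)
    (hbpsd : ∀ u : V, 0 ≤ b u u)
    (htpsd : ∀ u : V, 0 ≤ t u u)
    (W₁ W₂ : Submodule ℝ V)
    (hborth : ∀ u₁ ∈ W₁, ∀ u₂ ∈ W₂, b u₁ u₂ = 0)
    (M : ℝ) (hM : 0 ≤ M)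
    (htrace : ∀ u : V, u ∈ W₁ ∨ u ∈ W₂ → t u u ≤ M * b u u)
    (hpos : ∀ u : V, u ∈ W₁ ⊔ W₂ → u ≠ 0 → 0 < b u u + t u u) :
    ∃ Cstar : ℝ, Cstar < 1 ∧
      (∀ u₁ ∈ W₁, ∀ u₂ ∈ W₂,
        |b u₁ u₂ + t u₁ u₂| ≤
          Cstar * Real.sqrt (b u₁ u₁ + t u₁ u₁) * Real.sqrt (b u₂ u₂ + t u₂ u₂)) ∧
      (∀ u₁ ∈ W₁, ∀ u₂ ∈ W₂,
        (b u₁ u₁ + t u₁ u₁) + (b u₂ u₂ + t u₂ u₂) ≤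
          (1 - Cstar)⁻¹ * (b (u₁ + u₂) (u₁ + u₂) + t (u₁ + u₂) (u₁ + u₂))) := by
  set C : ℝ := M / (M + 1) with hCdef
  have hM1 : (0:ℝ) < M + 1 := by linarith
  have hC0 : 0 ≤ C := div_nonneg hM hM1.le
  have hC1 : C < 1 := (div_lt_one hM1).mpr (by linarith)
  -- the key bound on each subspace: t u u ≤ C * (b u u + t u u)
  have hkey : ∀ u : V, u ∈ W₁ ∨ u ∈ W₂ → t u u ≤ C * (b u u + t u u) := by
    intro u hu
    have h := htrace u hu
    rw [hCdef, div_mul_eq_mul_div, le_div_iff₀ hM1]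
    nlinarith [htpsd u, hbpsd u]
  -- strengthened Cauchy-Schwarz
  have hCS : ∀ u₁ ∈ W₁, ∀ u₂ ∈ W₂,
      |b u₁ u₂ + t u₁ u₂| ≤
        C * Real.sqrt (b u₁ u₁ + t u₁ u₁) * Real.sqrt (b u₂ u₂ + t u₂ u₂) := by
    intro u₁ h₁ u₂ h₂
    rw [hborth u₁ h₁ u₂ h₂, zero_add]
    have hcs := psd_bilin_cauchy_schwarz t htsym htpsd u₁ u₂
    have h1 : Real.sqrt (t u₁ u₁) ≤ Real.sqrt C * Real.sqrt (b u₁ u₁ + t u₁ u₁) := by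
      rw [← Real.sqrt_mul hC0]
      exact Real.sqrt_le_sqrt (hkey u₁ (Or.inl h₁))
    have h2 : Real.sqrt (t u₂ u₂) ≤ Real.sqrt C * Real.sqrt (b u₂ u₂ + t u₂ u₂) := by
      rw [← Real.sqrt_mul hC0]
      exact Real.sqrt_le_sqrt (hkey u₂ (Or.inr h₂))
    calc |t u₁ u₂| ≤ Real.sqrt (t u₁ u₁) * Real.sqrt (t u₂ u₂) := hcs
      _ ≤ (Real.sqrt C * Real.sqrt (b u₁ u₁ + t u₁ u₁)) *
            (Real.sqrt C * Real.sqrt (b u₂ u₂ + t u₂ u₂)) := by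
          apply mul_le_mul h1 h2 (Real.sqrt_nonneg _)
          positivity
      _ = (Real.sqrt C * Real.sqrt C) *
            (Real.sqrt (b u₁ u₁ + t u₁ u₁) * Real.sqrt (b u₂ u₂ + t u₂ u₂)) := by ring
      _ = C * Real.sqrt (b u₁ u₁ + t u₁ u₁) * Real.sqrt (b u₂ u₂ + t u₂ u₂) := by
          rw [Real.mul_self_sqrt hC0]; ring
  refine ⟨C, hC1, hCS, ?_⟩
  intro u₁ h₁ u₂ h₂
  set a₁ := b u₁ u₁ + t u₁ u₁ with ha₁
  set a₂ := b u₂ u₂ + t u₂ u₂ with ha₂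
  have ha₁0 : 0 ≤ a₁ := by have := hbpsd u₁; have := htpsd u₁; simp [ha₁]; linarith
  have ha₂0 : 0 ≤ a₂ := by have := hbpsd u₂; have := htpsd u₂; simp [ha₂]; linarith
  have hexp : b (u₁ + u₂) (u₁ + u₂) + t (u₁ + u₂) (u₁ + u₂) =
      a₁ + a₂ + 2 * (b u₁ u₂ + t u₁ u₂) := by
    simp only [map_add, LinearMap.add_apply, ha₁, ha₂]
    linarith [hbsym u₂ u₁, htsym u₂ u₁]
  have hcs := hCS u₁ h₁ u₂ h₂
  have hAM : 2 * (Real.sqrt a₁ * Real.sqrt a₂) ≤ a₁ + a₂ := by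
    nlinarith [sq_nonneg (Real.sqrt a₁ - Real.sqrt a₂), Real.sq_sqrt ha₁0,
      Real.sq_sqrt ha₂0]
  rw [hexp, inv_mul_eq_div, le_div_iff₀ (by linarith : (0:ℝ) < 1 - C)]
  have habs := neg_abs_le (b u₁ u₂ + t u₁ u₂)
  nlinarith [mul_le_mul_of_nonneg_left hAM hC0]
end
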